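/- Let f : ℝ^d → ℝ be convex and differentiable, and let x_t, y ∈ ℝ^d. If ‖x_{t+1} − y‖² ≤ ‖x_t − y‖² + η_t²L² − 2η_t⟨∇f(x_t), x_t − y⟩ for each t = 1,…,T with η_t = 1/√t, and ‖x_t − y‖ ≤ D for all t, then ∑_{t=1}^T (f(x_t) − f(y)) ≤ (√T/2)(D² + 2L²). -/

import Mathlib

open RealInnerProductSpace

lemma sum_inv_sqrt_le (n : ℕ) :
    ∑ t ∈ Finset.Icc 1 n, 1 / Real.sqrt t ≤ 2 * Real.sqrt n := by
  induction n with
  | zero => simp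
  | succ n ih =>
    rw [Finset.sum_Icc_succ_top (by omega : 1 ≤ n + 1)]
    have h1 : Real.sqrt n ^ 2 = n := Real.sq_sqrt (by positivity)
    have h2 : Real.sqrt (n + 1) ^ 2 = (n : ℝ) + 1 := Real.sq_sqrt (by positivity)
    have h3 : (0:ℝ) ≤ Real.sqrt n := Real.sqrt_nonneg _
    have h4 : (0:ℝ) < Real.sqrt (n + 1) := Real.sqrt_pos.2 (by positivity)
    have key : 1 / Real.sqrt (n + 1) ≤ 2 * Real.sqrt (n + 1) - 2 * Real.sqrt n := by
      rw [div_le_iff₀ h4]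
      nlinarith [sq_nonneg (Real.sqrt (n + 1) - Real.sqrt n)]
    have : (↑(n + 1) : ℝ) = (n : ℝ) + 1 := by push_cast; ring
    rw [this]
    linarith
lemma first_order (d : ℕ) (f : EuclideanSpace ℝ (Fin d) → ℝ)
    (hconv : ConvexOn ℝ Set.univ f) (a x y : EuclideanSpace ℝ (Fin d))
    (hx : HasGradientAt f a x) : f x - f y ≤ ⟪a, x - y⟫ := by
  set A : ℝ →ᵃ[ℝ] EuclideanSpace ℝ (Fin d) := AffineMap.lineMap x y with hA
  have hφ : ConvexOn ℝ Set.univ (f ∘ A) := by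
    have := hconv.comp_affineMap A
    simpa using this
  have hline : HasDerivAt (A : ℝ → EuclideanSpace ℝ (Fin d)) (y - x) 0 := by
    have : (A : ℝ → EuclideanSpace ℝ (Fin d)) = fun s : ℝ => s • (y - x) + x := by
      funext s
      simp [hA, AffineMap.lineMap_apply]
    rw [this]
    simpa using ((hasDerivAt_id (0:ℝ)).smul_const (y - x)).add_const x
  have hA0 : A 0 = x := by simp [hA]
  have hd : HasDerivAt (f ∘ A) (⟪a, y - x⟫) 0 := by
    have hf : HasFDerivAt f (InnerProductSpace.toDual ℝ _ a) (A 0) := by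
      rw [hA0]; exact hx.hasFDerivAt
    have := hf.comp_hasDerivAt 0 hline
    simpa using this
  have hslope := hφ.le_slope_of_hasDerivAt (Set.mem_univ (0:ℝ)) (Set.mem_univ (1:ℝ))
    one_pos hd
  have hs : slope (f ∘ A) 0 1 = f y - f x := by
    simp [slope, hA, AffineMap.lineMap_apply]
  rw [hs] at hslope
  have : ⟪a, y - x⟫ = -⟪a, x - y⟫ := by
    rw [← inner_neg_right]; congr 1; abel
  rw [this] at hslope
  linarith

theorem regret_bound (d : ℕ) (f : EuclideanSpace ℝ (Fin d) → ℝ)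
    (hconv : ConvexOn ℝ Set.univ f)
    (g : EuclideanSpace ℝ (Fin d) → EuclideanSpace ℝ (Fin d))
    (hgrad : ∀ x, HasGradientAt f (g x) x)
    (T : ℕ) (x : ℕ → EuclideanSpace ℝ (Fin d)) (y : EuclideanSpace ℝ (Fin d))
    (L D : ℝ) (hL : 0 ≤ L) (hD : 0 ≤ D)
    (hstep : ∀ t : ℕ, 1 ≤ t → t ≤ T →
      ‖x (t + 1) - y‖ ^ 2 ≤ ‖x t - y‖ ^ 2 + (1 / Real.sqrt t) ^ 2 * L ^ 2
        - 2 * (1 / Real.sqrt t) * ⟪g (x t), x t - y⟫)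
    (hdiam : ∀ t : ℕ, ‖x t - y‖ ≤ D) :
    ∑ t ∈ Finset.Icc 1 T, (f (x t) - f y) ≤ (Real.sqrt T / 2) * (D ^ 2 + 2 * L ^ 2) := by
  -- per-step bound on inner product
  have hr : ∀ t : ℕ, 1 ≤ t → t ≤ T →
      ⟪g (x t), x t - y⟫ ≤ Real.sqrt t / 2 * (‖x t - y‖ ^ 2 - ‖x (t+1) - y‖ ^ 2)
        + L ^ 2 / 2 * (1 / Real.sqrt t) := by
    intro t h1 h2
    have hs := hstep t h1 h2
    have hst : (0:ℝ) < Real.sqrt t := Real.sqrt_pos.2 (by positivity)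
    set u : ℝ := Real.sqrt t with hu
    set v : ℝ := 1 / u with hv
    set r : ℝ := ⟪g (x t), x t - y⟫ with hrr
    set a : ℝ := ‖x t - y‖ ^ 2 with ha
    set b : ℝ := ‖x (t+1) - y‖ ^ 2 with hb
    have huv : u * v = 1 := by rw [hv]; field_simp
    have key : 2 * v * r ≤ a - b + v ^ 2 * L ^ 2 := by linarith
    have hmul := mul_le_mul_of_nonneg_left key (le_of_lt hst)
    have e1 : u * (2 * v * r) = 2 * r := by
      rw [show u * (2 * v * r) = 2 * (u * v) * r from by ring, huv]; ring
    have e2 : u * (a - b + v ^ 2 * L ^ 2) = u * (a - b) + v * L ^ 2 := by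
      rw [show u * (a - b + v ^ 2 * L ^ 2) = u * (a - b) + (u * v) * (v * L ^ 2) from by ring,
        huv]; ring
    rw [e1, e2] at hmul
    linarith
  -- key induction
  have main : ∀ n : ℕ, n ≤ T →
      ∑ t ∈ Finset.Icc 1 n, ⟪g (x t), x t - y⟫
        ≤ Real.sqrt n / 2 * (D ^ 2 - ‖x (n+1) - y‖ ^ 2)
          + L ^ 2 / 2 * ∑ t ∈ Finset.Icc 1 n, (1 / Real.sqrt t) := by
    intro n
    induction n with
    | zero => intro _; simp
    | succ n ih =>
      intro hn
      have ihn := ih (by omega)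
      rw [Finset.sum_Icc_succ_top (by omega : 1 ≤ n + 1),
        Finset.sum_Icc_succ_top (by omega : 1 ≤ n + 1)]
      have hrn := hr (n+1) (by omega) hn
      have hmono : Real.sqrt n ≤ Real.sqrt (n+1) := by
        apply Real.sqrt_le_sqrt; push_cast; linarith
      have hdn : ‖x (n+1) - y‖ ^ 2 ≤ D ^ 2 := by
        have := hdiam (n+1)
        nlinarith [norm_nonneg (x (n+1) - y)]
      have hcast : ((↑(n+1) : ℝ)) = (n:ℝ) + 1 := by push_cast; ring
      push_cast at hrn ⊢
      nlinarith [hrn, ihn]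
  -- conclude
  have hT := main T le_rfl
  have hsum := sum_inv_sqrt_le T
  have hfo : ∑ t ∈ Finset.Icc 1 T, (f (x t) - f y)
      ≤ ∑ t ∈ Finset.Icc 1 T, ⟪g (x t), x t - y⟫ :=
    Finset.sum_le_sum fun t _ => first_order d f hconv (g (x t)) (x t) y (hgrad (x t))
  have hnn : 0 ≤ ‖x (T+1) - y‖ ^ 2 := by positivity
  have hstn : (0:ℝ) ≤ Real.sqrt T := Real.sqrt_nonneg _
  nlinarith [hfo, hT, hsum]
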